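/- For every integer M ≥ 2, the function t ↦ (1/(1−t)^(M−1)) · ∫_t^1 (1−z)^(M−2)/z dz is strictly decreasing on the interval (0,1). Consequently, P̃_lo(t) = γ1(1+γ2)/((M−1)·β1) + (γ2/((1−t)^(M−1)·β2))·∫_t^1 (1−z)^(M−2)/z dz is strictly decreasing in the threshold t for any β1, β2, γ1, γ2 > 0. -/

import Mathlib

open Set MeasureTheory intervalIntegral

/-- the threshold-dependent factor
`t ↦ (1/(1−t)^(M−1)) ∫_t^1 (1−z)^(M−2)/z dz` is strictly decreasing on `(0,1)`,
and consequently so is `P̃_lo(t)` for any positive `β1, β2, γ1, γ2`. -/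
theorem cbnoma_Plo_strictAntiOn (M : ℕ) (hM : 2 ≤ M) :
    StrictAntiOn
      (fun t : ℝ => (1 / (1 - t) ^ (M - 1)) * ∫ z in t..1, (1 - z) ^ (M - 2) / z)
      (Ioo 0 1)
    ∧ ∀ β1 β2 γ1 γ2 : ℝ, 0 < β1 → 0 < β2 → 0 < γ1 → 0 < γ2 →
        StrictAntiOn
          (fun t : ℝ => γ1 * (1 + γ2) / (((M : ℝ) - 1) * β1)
            + (γ2 / ((1 - t) ^ (M - 1) * β2)) * ∫ z in t..1, (1 - z) ^ (M - 2) / z)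
          (Ioo 0 1) := by
  obtain ⟨n, rfl⟩ : ∃ n, M = n + 2 := ⟨M - 2, by omega⟩
  have e1 : n + 2 - 1 = n + 1 := rfl
  have e2 : n + 2 - 2 = n := rfl
  rw [e1, e2]
  set f : ℝ → ℝ := fun z => (1 - z) ^ n / z with hfdef
  set F : ℝ → ℝ := fun t => (1 / (1 - t) ^ (n + 1)) * ∫ z in t..1, f z with hFdef
  -- continuity of f on (0, ∞)
  have hfc : ContinuousOn f (Ioi (0 : ℝ)) := by
    apply ContinuousOn.div
    · fun_prop
    · fun_prop
    · intro z hz; exact ne_of_gt hz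
  have hint : ∀ t ∈ Ioo (0 : ℝ) 1, IntervalIntegrable f volume t 1 := by
    intro t ht
    apply (hfc.mono ?_).intervalIntegrable
    rw [uIcc_of_le ht.2.le]
    intro z hz
    exact lt_of_lt_of_le ht.1 hz.1
  -- derivative of the integral
  have hg : ∀ t ∈ Ioo (0 : ℝ) 1,
      HasDerivAt (fun u => ∫ z in u..1, f z) (-f t) t := by
    intro t ht
    exact intervalIntegral.integral_hasDerivAt_left (hint t ht)
      (hfc.stronglyMeasurableAtFilter isOpen_Ioi t ht.1)
      (hfc.continuousAt (isOpen_Ioi.mem_nhds ht.1))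
  -- key strict estimate
  have hkey : ∀ t ∈ Ioo (0 : ℝ) 1,
      (∫ z in t..1, f z) < (1 - t) ^ (n + 1) / (((n : ℝ) + 1) * t) := by
    intro t ht
    obtain ⟨ht0, ht1⟩ := ht
    have hconst : IntervalIntegrable (fun z : ℝ => (1 - z) ^ n / t) volume t 1 := by
      apply Continuous.intervalIntegrable
      fun_prop
    have hdiff : 0 < ∫ z in t..1, ((1 - z) ^ n / t - f z) := by
      apply intervalIntegral_pos_of_pos_on (hconst.sub (hint t ⟨ht0, ht1⟩))
      · intro z hz
        have h1 : (0 : ℝ) < 1 - z := by linarith [hz.2]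
        have h2 : f z < (1 - z) ^ n / t :=
          div_lt_div_of_pos_left (pow_pos h1 n) ht0 hz.1
        linarith
      · exact ht1
    have heval : ∫ z in t..1, (1 - z) ^ n / t
        = (1 - t) ^ (n + 1) / (((n : ℝ) + 1) * t) := by
      have h3 : ∫ z in t..1, (1 - z) ^ n = (1 - t) ^ (n + 1) / ((n : ℝ) + 1) := by
        have h4 := intervalIntegral.integral_comp_sub_left
          (a := t) (b := 1) (fun x : ℝ => x ^ n) 1
        simp only [sub_self] at h4
        rw [h4, integral_pow]
        simp
      rw [intervalIntegral.integral_div, h3, div_div]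
    rw [intervalIntegral.integral_sub hconst (hint t ⟨ht0, ht1⟩), heval] at hdiff
    linarith
  -- strict antitonicity of F
  have hA : StrictAntiOn F (Ioo 0 1) := by
    have hD : ∀ t ∈ Ioo (0 : ℝ) 1, HasDerivAt F
        ((((n : ℝ) + 1) * (1 - t) ^ n / ((1 - t) ^ (n + 1)) ^ 2)
            * (∫ z in t..1, f z)
          + ((1 - t) ^ (n + 1))⁻¹ * (-f t)) t := by
      intro t ht
      have h1t : (0 : ℝ) < 1 - t := by linarith [ht.2]
      have hp : HasDerivAt (fun u : ℝ => (1 - u) ^ (n + 1))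
          ((↑(n + 1) : ℝ) * (1 - t) ^ n * (-1)) t := by
        have := ((hasDerivAt_id t).const_sub 1).pow (n + 1)
        simpa [Pi.pow_def] using this
      have hinv := hp.inv (by positivity)
      have hmul := hinv.mul (hg t ht)
      have hval : -((↑(n + 1) : ℝ) * (1 - t) ^ n * -1) / ((1 - t) ^ (n + 1)) ^ 2
          = ((n : ℝ) + 1) * (1 - t) ^ n / ((1 - t) ^ (n + 1)) ^ 2 := by
        push_cast; ring
      rw [hval] at hmul
      simp only [hFdef, one_div]
      exact hmul
    have hneg : ∀ t ∈ Ioo (0 : ℝ) 1, deriv F t < 0 := by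
      intro t ht
      rw [(hD t ht).deriv]
      obtain ⟨ht0, ht1⟩ := ht
      have h1t : (0 : ℝ) < 1 - t := by linarith
      have hpc : (0 : ℝ) < ((n : ℝ) + 1) * (1 - t) ^ n / ((1 - t) ^ (n + 1)) ^ 2 := by
        positivity
      have h5 := mul_lt_mul_of_pos_left (hkey t ⟨ht0, ht1⟩) hpc
      have h6 : ((n : ℝ) + 1) * (1 - t) ^ n / ((1 - t) ^ (n + 1)) ^ 2
          * ((1 - t) ^ (n + 1) / (((n : ℝ) + 1) * t)) = 1 / (t * (1 - t)) := by
        rw [pow_succ]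
        field_simp
        ring
      have h7 : ((1 - t) ^ (n + 1))⁻¹ * (-f t) = -(1 / (t * (1 - t))) := by
        simp only [hfdef]
        rw [pow_succ]
        field_simp
      rw [h7]
      rw [h6] at h5
      linarith
    apply strictAntiOn_of_deriv_neg (convex_Ioo 0 1)
    · intro t ht
      exact ((hD t ht).continuousAt).continuousWithinAt
    · intro t ht
      rw [interior_Ioo] at ht
      exact hneg t ht
  refine ⟨hA, ?_⟩
  intro β1 β2 γ1 γ2 hβ1 hβ2 hγ1 hγ2 s hs t ht hst
  simp only
  have key := hA hs ht hst
  have e : ∀ u ∈ Ioo (0 : ℝ) 1,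
      (γ2 / ((1 - u) ^ (n + 1) * β2)) * (∫ z in u..1, f z) = (γ2 / β2) * F u := by
    intro u hu
    have h1u : (0 : ℝ) < 1 - u := by linarith [hu.2]
    have hne : ((1 : ℝ) - u) ^ (n + 1) ≠ 0 := by positivity
    have hc : γ2 / ((1 - u) ^ (n + 1) * β2) = (γ2 / β2) * (1 / (1 - u) ^ (n + 1)) := by
      rw [div_mul_eq_div_div_swap, div_eq_mul_one_div]
    simp only [hFdef]
    rw [hc, mul_assoc]
  rw [e s hs, e t ht]
  have hc : (0 : ℝ) < γ2 / β2 := div_pos hγ2 hβ2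
  have := mul_lt_mul_of_pos_left key hc
  linarith
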